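/- For k ≥ 0 and N ≥ 1, the PLRS generated by [1, 0,...,0, N] with k zeros (so length L = k+2) is complete if and only if N ≤ ⌈(k+2)(k+3)/4⌉. -/

import Mathlib

/-- A sequence of positive integers (indexed from 1) is complete if every positive
integer is a sum of distinct terms (each index used at most once). -/
def SeqComplete (a : ℕ → ℕ) : Prop :=
  ∀ N : ℕ, 0 < N → ∃ s : Finset ℕ, (∀ i ∈ s, 1 ≤ i) ∧ ∑ i ∈ s, a i = N

/-- `H` is the positive linear recurrence sequence (PLRS) with coefficients
`c 1, …, c L` (indexed from 1). -/
def IsPLRS (L : ℕ) (c : ℕ → ℕ) (H : ℕ → ℕ) : Prop :=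
  H 1 = 1 ∧
  (∀ n, 1 ≤ n → n < L → H (n + 1) = (∑ i ∈ Finset.Icc 1 n, c i * H (n + 1 - i)) + 1) ∧
  (∀ n, L ≤ n → H (n + 1) = ∑ i ∈ Finset.Icc 1 L, c i * H (n + 1 - i))

namespace OneKZ

variable {k N : ℕ} {H : ℕ → ℕ} in
lemma lin_of (h : IsPLRS (k + 2) (fun i => if i = 1 then 1 else if i = k + 2 then N else 0) H) :
    ∀ n, 1 ≤ n → n ≤ k + 2 → H n = n := by
  intro n
  induction n with
  | zero => omega
  | succ n ih =>
    intro _ hn2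
    rcases Nat.eq_zero_or_pos n with h0 | h1
    · subst h0; exact h.1
    · have hrec := h.2.1 n h1 (by omega)
      have hsum : (∑ i ∈ Finset.Icc 1 n,
          (fun i => if i = 1 then 1 else if i = k + 2 then N else 0) i * H (n + 1 - i)) = H n := by
        rw [Finset.sum_eq_single_of_mem 1 (Finset.mem_Icc.mpr ⟨le_refl 1, h1⟩)]
        · simp
        · intro b hb hb1
          simp only [Finset.mem_Icc] at hb
          have : b ≠ k + 2 := by omega
          simp [hb1, this]
      rw [hsum] at hrec
      rw [hrec, ih h1 (by omega)]

variable {k N : ℕ} {H : ℕ → ℕ} in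
lemma rec_of (h : IsPLRS (k + 2) (fun i => if i = 1 then 1 else if i = k + 2 then N else 0) H) :
    ∀ n, k + 2 ≤ n → H (n + 1) = H n + N * H (n - (k + 1)) := by
  intro n hn
  have hrec := h.2.2 n hn
  have h1m : (1 : ℕ) ∈ Finset.Icc 1 (k + 2) := by simp
  have h2m : (k + 2) ∈ (Finset.Icc 1 (k + 2)).erase 1 := by
    simp [Finset.mem_erase]
  rw [← Finset.add_sum_erase _ _ h1m, ← Finset.add_sum_erase _ _ h2m] at hrec
  have hz : (∑ i ∈ ((Finset.Icc 1 (k + 2)).erase 1).erase (k + 2),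
      (fun i => if i = 1 then 1 else if i = k + 2 then N else 0) i * H (n + 1 - i)) = 0 := by
    apply Finset.sum_eq_zero
    intro b hb
    simp only [Finset.mem_erase, Finset.mem_Icc] at hb
    simp [hb.1, hb.2.1]
  rw [hz] at hrec
  have e1 : n + 1 - (k + 2) = n - (k + 1) := by omega
  simpa [e1] using hrec

def tri : ℕ → ℕ
  | 0 => 0
  | j+1 => tri j + (j+1)

def tet : ℕ → ℕ
  | 0 => 0
  | j+1 => tet j + tri (j+1)

lemma tri_two (j : ℕ) : 2 * tri j = j * (j+1) := by
  induction j with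
  | zero => rfl
  | succ j ih => simp only [tri]; linear_combination ih

lemma tet_six (j : ℕ) : 6 * tet j = j * (j+1) * (j+2) := by
  induction j with
  | zero => rfl
  | succ j ih => simp only [tet]; linear_combination ih + 3 * tri_two (j+1)

lemma tri_ge (j : ℕ) : j ≤ tri j := by
  have := tri_two j; nlinarith

lemma tri_succ_le_tet_add_two (j : ℕ) : tri (j+1) ≤ tet j + 2 := by
  match j with
  | 0 => decide
  | 1 => decide
  | 2 => decide
  | (i+3) =>
    have h1 := tri_two (i+4); have h2 := tet_six (i+3)
    nlinarith [Nat.zero_le (i*(i+4)*(i+5))]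

lemma tet_ge (r : ℕ) (hr : 2 ≤ r) : r + 2 ≤ tet r := by
  obtain ⟨s, rfl⟩ : ∃ s, r = s + 2 := ⟨r - 2, by omega⟩
  have h2 := tet_six (s+2)
  nlinarith [Nat.zero_le (s*(s+3)*(s+4))]

section Arith

variable {k N : ℕ}

lemma A1 (hN : 1 ≤ N) (h4 : 4*N ≤ (k+2)*(k+3)+2) : k + 2 + N ≤ 1 + tri (k+2) := by
  have t2 := tri_two (k+2); nlinarith [sq_nonneg k]

lemma A2 (hN : 1 ≤ N) (h4 : 4*N ≤ (k+2)*(k+3)+2) : N*((k+2)+N) ≤ (k+2) + N*tri (k+2) := by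
  have t2 := tri_two (k+2)
  zify at *
  nlinarith [mul_nonneg (sub_nonneg.mpr h4) (sub_nonneg.mpr hN : (0:ℤ) ≤ N - 1),
    mul_nonneg (sub_nonneg.mpr h4) (by positivity : (0:ℤ) ≤ (N:ℤ)),
    mul_nonneg (by positivity : (0:ℤ) ≤ (k:ℤ)) (sub_nonneg.mpr hN : (0:ℤ) ≤ N - 1),
    mul_nonneg (mul_nonneg (by positivity : (0:ℤ) ≤ (k:ℤ)) (by positivity : (0:ℤ) ≤ (k:ℤ))) (sub_nonneg.mpr hN : (0:ℤ) ≤ N - 1)]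

lemma A4 (hN : 1 ≤ N) (h4 : 4*N ≤ (k+2)*(k+3)+2) :
    N*(k+2) + 3*N^2 ≤ 1 + tri (k+2) + (k+2)^2 + N * tet (k+2) := by
  rcases Nat.lt_or_ge k 3 with hk | hk
  · interval_cases k <;> (have hub : N ≤ 5 := by omega) <;> interval_cases N <;> (revert h4; decide)
  · obtain ⟨K, rfl⟩ : ∃ K, k = K + 3 := ⟨k - 3, by omega⟩
    have t2 := tri_two (K+5); have s2 := tet_six (K+5)
    zify at *
    nlinarith [mul_nonneg (sub_nonneg.mpr h4) (by positivity : (0:ℤ) ≤ (N:ℤ)),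
      mul_nonneg (by positivity : (0:ℤ) ≤ (N:ℤ)) (by positivity : (0:ℤ) ≤ (K:ℤ)^3),
      mul_nonneg (by positivity : (0:ℤ) ≤ (N:ℤ)) (by positivity : (0:ℤ) ≤ (K:ℤ)^2),
      mul_nonneg (by positivity : (0:ℤ) ≤ (N:ℤ)) (by positivity : (0:ℤ) ≤ (K:ℤ))]

lemma A5 (hN : 1 ≤ N) (h4 : 4*N ≤ (k+2)*(k+3)+2) :
    N^2*((k+2)+N) ≤ (k+2) + N*tri (k+1) + N*(k+2)^2 + N^2 * tet (k+1) := by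
  rcases Nat.lt_or_ge k 2 with hk | hk
  · interval_cases k <;> (have hub : N ≤ 5 := by omega) <;> interval_cases N <;> (revert h4; decide)
  · obtain ⟨K, rfl⟩ : ∃ K, k = K + 2 := ⟨k - 2, by omega⟩
    have t1 := tri_two (K+3); have s1 := tet_six (K+3)
    zify at *
    nlinarith [mul_nonneg (sub_nonneg.mpr h4) (by positivity : (0:ℤ) ≤ (N:ℤ)^2),
      mul_nonneg (by positivity : (0:ℤ) ≤ (N:ℤ)^2) (by positivity : (0:ℤ) ≤ (K:ℤ)^3),
      mul_nonneg (by positivity : (0:ℤ) ≤ (N:ℤ)^2) (by positivity : (0:ℤ) ≤ (K:ℤ)^2),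
      mul_nonneg (by positivity : (0:ℤ) ≤ (N:ℤ)^2) (by positivity : (0:ℤ) ≤ (K:ℤ)),
      mul_nonneg (by positivity : (0:ℤ) ≤ (N:ℤ)) (by positivity : (0:ℤ) ≤ (K:ℤ)^2),
      mul_nonneg (by positivity : (0:ℤ) ≤ (N:ℤ)) (by positivity : (0:ℤ) ≤ (K:ℤ))]

lemma A6 (hN : 1 ≤ N) (h4 : 4*N ≤ (k+2)*(k+3)+2) :
    N^2*((k+2)+3*N) ≤ (k+2) + N*tri (k+1) + N*(k+2)*(k+3) + N^2 * tet (k+2) := by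
  rcases Nat.lt_or_ge k 3 with hk | hk
  · interval_cases k <;> (have hub : N ≤ 5 := by omega) <;> interval_cases N <;> (revert h4; decide)
  · obtain ⟨K, rfl⟩ : ∃ K, k = K + 3 := ⟨k - 3, by omega⟩
    have t1 := tri_two (K+4); have s2 := tet_six (K+5)
    zify at *
    nlinarith [mul_nonneg (sub_nonneg.mpr h4) (by positivity : (0:ℤ) ≤ (N:ℤ)^2),
      mul_nonneg (by positivity : (0:ℤ) ≤ (N:ℤ)^2) (by positivity : (0:ℤ) ≤ (K:ℤ)^3),
      mul_nonneg (by positivity : (0:ℤ) ≤ (N:ℤ)^2) (by positivity : (0:ℤ) ≤ (K:ℤ)^2),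
      mul_nonneg (by positivity : (0:ℤ) ≤ (N:ℤ)^2) (by positivity : (0:ℤ) ≤ (K:ℤ)),
      mul_nonneg (by positivity : (0:ℤ) ≤ (N:ℤ)) (by positivity : (0:ℤ) ≤ (K:ℤ)^2),
      mul_nonneg (by positivity : (0:ℤ) ≤ (N:ℤ)) (by positivity : (0:ℤ) ≤ (K:ℤ))]

lemma A8 (hN : 1 ≤ N) (h4 : 4*N ≤ (k+2)*(k+3)+2) :
    N*((k+2)+6*N) ≤ (k+2) + N*tri (k+1) + N*(k+2)*3 + N^2*4 := by
  have t1 := tri_two (k+1)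
  zify at *
  nlinarith [mul_nonneg (sub_nonneg.mpr h4) (by positivity : (0:ℤ) ≤ (N:ℤ)),
    mul_nonneg (by positivity : (0:ℤ) ≤ (N:ℤ)) (by positivity : (0:ℤ) ≤ (k:ℤ)),
    mul_nonneg (sub_nonneg.mpr hN : (0:ℤ) ≤ (N:ℤ)-1) (by positivity : (0:ℤ) ≤ (k:ℤ))]

lemma A8z (hN : 1 ≤ N) (h4 : 4*N ≤ 8) : N*(2+5*N+N^2) ≤ 2+7*N+4*N^2 := by
  have hub : N ≤ 2 := by omega
  interval_cases N <;> decide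

end Arith

def pS (H : ℕ → ℕ) (n : ℕ) : ℕ := ∑ i ∈ Finset.Icc 1 n, H i

section Main

variable {k N : ℕ} {H : ℕ → ℕ}
  (hN : 1 ≤ N)
  (hlin : ∀ n, 1 ≤ n → n ≤ k + 2 → H n = n)
  (hrec : ∀ n, k + 2 ≤ n → H (n + 1) = H n + N * H (n - (k + 1)))
  (h4 : 4*N ≤ (k+2)*(k+3)+2)

lemma pS_succ (n : ℕ) : pS H (n + 1) = pS H n + H (n + 1) :=
  Finset.sum_Icc_succ_top (by omega) _

lemma pS_zero : pS H 0 = 0 := by simp [pS]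

include hlin hrec in
lemma mono_succ : ∀ n, 1 ≤ n → H n ≤ H (n + 1) := by
  intro n h1
  rcases le_or_gt (n + 1) (k + 2) with hle | hgt
  · rw [hlin n h1 (by omega), hlin (n+1) (by omega) hle]; omega
  · rw [hrec n (by omega)]; omega

include hlin hrec in
lemma mono_le : ∀ a b, 1 ≤ a → a ≤ b → H a ≤ H b := by
  intro a b h1 hab
  induction b with
  | zero => omega
  | succ b ih =>
    rcases Nat.lt_or_ge a (b+1) with h | h
    · exact le_trans (ih (by omega)) (mono_succ hlin hrec b (by omega))
    · have : a = b + 1 := by omega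
      subst this; rfl

include hlin hrec in
lemma Hpos : ∀ n, 1 ≤ n → 1 ≤ H n := by
  intro n h1
  have := mono_le hlin hrec 1 n le_rfl h1
  rw [hlin 1 le_rfl (by omega)] at this
  omega

include hlin hrec in
lemma F1 : ∀ j, j ≤ k + 2 → H (k + 2 + j) = (k + 2) + N * tri j := by
  intro j
  induction j with
  | zero => intro _; simpa [tri] using hlin (k+2) (by omega) le_rfl
  | succ j ih =>
    intro hj
    have hr := hrec (k + 2 + j) (by omega)
    have e1 : k + 2 + j - (k + 1) = j + 1 := by omega
    rw [e1, hlin (j+1) (by omega) (by omega)] at hr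
    have : k + 2 + (j + 1) = (k + 2 + j) + 1 := by omega
    rw [this, hr, ih (by omega)]
    simp only [tri]; ring

include hlin hrec in
lemma F2 : ∀ r, r ≤ k + 2 →
    H (2*k + 4 + r) = H (2*k + 3) + N * (k + 2) * (r + 1) + N^2 * tet r := by
  intro r
  induction r with
  | zero =>
    intro _
    have hr := hrec (2*k + 3) (by omega)
    have e1 : 2*k + 3 - (k + 1) = k + 2 := by omega
    have e2 : 2*k + 3 + 1 = 2*k + 4 + 0 := by omega
    rw [e1, hlin (k+2) (by omega) le_rfl, e2] at hr
    rw [hr]; simp [tet]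
  | succ r ih =>
    intro hr2
    have hr := hrec (2*k + 4 + r) (by omega)
    have e1 : 2*k + 4 + r - (k + 1) = k + 2 + (r + 1) := by omega
    rw [e1, F1 hlin hrec (r+1) (by omega)] at hr
    have e2 : 2*k + 4 + (r + 1) = (2*k + 4 + r) + 1 := by omega
    rw [e2, hr, ih (by omega)]
    simp only [tet]; ring

include hlin in
lemma FS0 : ∀ n, n ≤ k + 2 → pS H n = tri n := by
  intro n
  induction n with
  | zero => intro _; simp [pS, tri]
  | succ n ih =>
    intro hn
    rw [pS_succ, ih (by omega), hlin (n+1) (by omega) hn]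
    simp [tri]

include hlin hrec in
lemma FS : ∀ j, j ≤ k + 2 →
    pS H (k + 2 + j) = tri (k + 2) + (k + 2) * j + N * tet j := by
  intro j
  induction j with
  | zero => intro _; simpa [tet] using FS0 hlin (k+2) le_rfl
  | succ j ih =>
    intro hj
    have e2 : k + 2 + (j + 1) = (k + 2 + j) + 1 := by omega
    rw [e2, pS_succ, ih (by omega)]
    have e3 : (k + 2 + j) + 1 = k + 2 + (j + 1) := by omega
    rw [e3, F1 hlin hrec (j+1) hj]
    simp only [tet]; ring

include hN hlin hrec h4 in
lemma claimC : ∀ d, N * H (k+5+d) ≤ H (2*k+6+d) := by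
  intro d
  induction d using Nat.strong_induction_on with
  | _ d ih =>
  rcases Nat.eq_zero_or_pos d with rfl | hd
  · -- base case d = 0
    rcases Nat.eq_zero_or_pos k with rfl | hk
    · -- k = 0
      have h5 := F2 hlin hrec 1 (by omega)
      have h6 := F2 hlin hrec 2 (by omega)
      have h3 := F1 hlin hrec 1 (by omega)
      norm_num [tet, tri] at h5 h6 h3 ⊢
      rw [h5, h6, h3]
      have := A8z hN (by omega)
      nlinarith [this]
    · -- k ≥ 1
      have hk5 := F1 hlin hrec 3 (by omega)
      have e1 : k + 2 + 3 = k + 5 := by omega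
      rw [e1] at hk5
      have h26 := F2 hlin hrec 2 (by omega)
      have e2 : 2*k + 4 + 2 = 2*k + 6 := by omega
      rw [e2] at h26
      have h23 := F1 hlin hrec (k+1) (by omega)
      have e3 : k + 2 + (k+1) = 2*k + 3 := by omega
      rw [e3] at h23
      have hA := A8 hN h4
      have e4 : k+5+0 = k+5 := by omega
      have e5 : 2*k+6+0 = 2*k+6 := by omega
      have ht3 : tri 3 = 6 := rfl
      have ht2 : tet 2 = 4 := rfl
      rw [e4, e5, hk5, h26, h23, ht3, ht2]
      refine le_trans (le_of_eq (by ring)) (le_trans hA (le_of_eq (by ring)))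
  · -- step
    obtain ⟨e, rfl⟩ : ∃ e, d = e + 1 := ⟨d - 1, by omega⟩
    have r1 := hrec (2*k+6+e) (by omega)
    have e1 : 2*k+6+e - (k+1) = k+5+e := by omega
    rw [e1] at r1
    have r2 := hrec (k+5+e) (by omega)
    have e2 : k+5+e - (k+1) = 4+e := by omega
    rw [e2] at r2
    have key : N^2 * H (4+e) ≤ H (2*k+6+e) := by
      rcases Nat.lt_or_ge (4+e) (k+3) with hs | hs
      · -- 4+e ≤ k+2 : trivial case via tet_ge
        have hH4 : H (4+e) = 4+e := hlin _ (by omega) (by omega)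
        have hF2 := F2 hlin hrec (e+2) (by omega)
        have e5 : 2*k+4+(e+2) = 2*k+6+e := by omega
        rw [e5] at hF2
        have htet : (e+2)+2 ≤ tet (e+2) := tet_ge (e+2) (by omega)
        have hmul : N^2*(4+e) ≤ N^2 * tet (e+2) := Nat.mul_le_mul_left _ (by omega)
        rw [hH4, hF2]
        exact le_trans hmul (Nat.le_add_left _ _)
      rcases Nat.lt_or_ge (4+e) (k+4) with hs2 | hs2
      · -- 4+e = k+3, e = k-1
        have hek : 4+e = k+3 := by omega
        have hH4 : H (4+e) = (k+2) + N := by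
          have := F1 hlin hrec 1 (by omega)
          have e6 : k+2+1 = 4+e := by omega
          rw [e6] at this
          simpa [tri] using this
        have hF2 := F2 hlin hrec (k+1) (by omega)
        have e5 : 2*k+4+(k+1) = 2*k+6+e := by omega
        rw [e5] at hF2
        have h23 := F1 hlin hrec (k+1) (by omega)
        have e3 : k + 2 + (k+1) = 2*k + 3 := by omega
        rw [e3] at h23
        have hA := A5 hN h4
        rw [hH4, hF2, h23]
        refine le_trans hA (le_of_eq (by ring))
      rcases Nat.lt_or_ge (4+e) (k+5) with hs3 | hs3
      · -- 4+e = k+4, e = k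
        have hH4 : H (4+e) = (k+2) + 3*N := by
          have := F1 hlin hrec 2 (by omega)
          have e6 : k+2+2 = 4+e := by omega
          rw [e6] at this
          simp only [tri] at this
          omega
        have hF2 := F2 hlin hrec (k+2) (by omega)
        have e5 : 2*k+4+(k+2) = 2*k+6+e := by omega
        rw [e5] at hF2
        have h23 := F1 hlin hrec (k+1) (by omega)
        have e3 : k + 2 + (k+1) = 2*k + 3 := by omega
        rw [e3] at h23
        have hA := A6 hN h4
        rw [hH4, hF2, h23]
        refine le_trans hA (le_of_eq (by ring))
      · -- 4+e ≥ k+5 : use IH twice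
        obtain ⟨e', rfl⟩ : ∃ e', e = k + 1 + e' := ⟨e - (k+1), by omega⟩
        have ih1 := ih e' (by omega)
        have ih2 := ih (k+1+e') (by omega)
        have e7 : 4+(k+1+e') = k+5+e' := by omega
        have e8 : 2*k+6+e' = k+5+(k+1+e') := by omega
        rw [e7]
        calc N^2 * H (k+5+e') = N * (N * H (k+5+e')) := by ring
          _ ≤ N * H (2*k+6+e') := Nat.mul_le_mul_left _ ih1
          _ = N * H (k+5+(k+1+e')) := by rw [e8]
          _ ≤ H (2*k+6+(k+1+e')) := ih2
    have e3 : k+5+(e+1) = (k+5+e)+1 := by omega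
    have e4 : 2*k+6+(e+1) = (2*k+6+e)+1 := by omega
    rw [e3, e4, r2, r1]
    nlinarith [key]

include hN hlin hrec h4 in
lemma Bearly : ∀ n, n ≤ 2*k+3 → H (n+1) ≤ 1 + pS H n := by
  intro n hn
  rcases Nat.eq_zero_or_pos n with rfl | hpos
  · rw [pS_zero, hlin 1 le_rfl (by omega)]
  rcases Nat.lt_or_ge n (k+2) with hsm | hbg
  · rw [hlin (n+1) (by omega) (by omega), FS0 hlin n (by omega)]
    have := tri_ge n
    omega
  · obtain ⟨j, rfl⟩ : ∃ j, n = k + 2 + j := ⟨n - (k+2), by omega⟩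
    have hj : j ≤ k + 1 := by omega
    have hF := F1 hlin hrec (j+1) (by omega)
    have e1 : k+2+(j+1) = (k+2+j)+1 := by omega
    rw [← e1, hF, FS hlin hrec j (by omega)]
    rcases Nat.eq_zero_or_pos j with rfl | hjpos
    · have hA := A1 (k := k) hN h4
      have ht1 : tri (0+1) = 1 := rfl
      have ht0 : tet 0 = 0 := rfl
      rw [ht1, ht0]
      omega
    · have h1 : N * tri (j+1) ≤ N * (tet j + 2) :=
        Nat.mul_le_mul_left _ (tri_succ_le_tet_add_two j)
      have h2 : 2*N ≤ tri (k+2) + 1 := by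
        have ht := tri_two (k+2)
        have he : (k+2)*((k+2)+1) = (k+2)*(k+3) := by ring
        omega
      have h3 : k + 2 ≤ (k+2) * j := Nat.le_mul_of_pos_right _ hjpos
      nlinarith

include hN hlin hrec h4 in
lemma B24 : H (2*k+5) ≤ 1 + pS H (2*k+4) := by
  have hB := Bearly hN hlin hrec h4 (2*k+3) le_rfl
  have r := hrec (2*k+4) (by omega)
  have e1 : 2*k+4 - (k+1) = k+3 := by omega
  rw [e1] at r
  have hK3 : H (k+3) = (k+2) + N := by
    have := F1 hlin hrec 1 (by omega)
    have e2 : k+2+1 = k+3 := by omega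
    rw [e2] at this; simpa [tri] using this
  have h24 : H (2*k+4) = (k+2) + N * tri (k+2) := by
    have := F1 hlin hrec (k+2) le_rfl
    have e2 : k+2+(k+2) = 2*k+4 := by omega
    rwa [e2] at this
  have hC := A2 (k := k) hN h4
  have hpS : pS H (2*k+4) = pS H (2*k+3) + H (2*k+4) := by
    have := pS_succ (H := H) (2*k+3)
    have e2 : 2*k+3+1 = 2*k+4 := by omega
    rwa [e2] at this
  have e3 : 2*k+4+1 = 2*k+5 := by omega
  rw [e3] at r
  have hC' : N * H (k+3) ≤ H (2*k+4) := by rw [hK3, h24]; exact hC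
  rw [r, hpS]
  linarith

include hN hlin hrec h4 in
lemma B25 : H (2*k+6) ≤ 1 + pS H (2*k+5) := by
  have h23 : H (2*k+3) = (k+2) + N * tri (k+1) := by
    have := F1 hlin hrec (k+1) (by omega)
    have e : k+2+(k+1) = 2*k+3 := by omega
    rwa [e] at this
  have h26 : H (2*k+6) = H (2*k+3) + N*(k+2)*3 + N^2*tet 2 := by
    have := F2 hlin hrec 2 (by omega)
    have e : 2*k+4+2 = 2*k+6 := by omega
    rwa [e] at this
  have h25 : H (2*k+5) = H (2*k+3) + N*(k+2)*2 + N^2*tet 1 := by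
    have := F2 hlin hrec 1 (by omega)
    have e : 2*k+4+1 = 2*k+5 := by omega
    rwa [e] at this
  have hpS4 : pS H (2*k+4) = tri (k+2) + (k+2)*(k+2) + N * tet (k+2) := by
    have := FS hlin hrec (k+2) le_rfl
    have e : k+2+(k+2) = 2*k+4 := by omega
    rwa [e] at this
  have hpS5 : pS H (2*k+5) = pS H (2*k+4) + H (2*k+5) := by
    have := pS_succ (H := H) (2*k+4)
    have e : 2*k+4+1 = 2*k+5 := by omega
    rwa [e] at this
  have hA := A4 hN h4
  have htet1 : tet 1 = 1 := by decide
  have htet2 : tet 2 = 4 := by decide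
  rw [h26, hpS5, hpS4, h25, htet1, htet2]
  nlinarith [hA]

include hN hlin hrec h4 in
lemma Ball : ∀ n, H (n+1) ≤ 1 + pS H n := by
  intro n
  rcases Nat.lt_or_ge n (2*k+4) with h | h
  · exact Bearly hN hlin hrec h4 n (by omega)
  rcases Nat.lt_or_ge n (2*k+5) with h2 | h2
  · have : n = 2*k+4 := by omega
    subst this
    have := B24 hN hlin hrec h4
    have e : 2*k+4+1 = 2*k+5 := by omega
    rw [e]; exact this
  · obtain ⟨d, rfl⟩ : ∃ d, n = 2*k+5+d := ⟨n - (2*k+5), by omega⟩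
    clear h h2
    induction d with
    | zero =>
      have := B25 hN hlin hrec h4
      have e : 2*k+5+0+1 = 2*k+6 := by omega
      rw [e]; simpa using this
    | succ d ihd =>
      have r1 := hrec (2*k+6+d) (by omega)
      have e1 : 2*k+6+d - (k+1) = k+5+d := by omega
      rw [e1] at r1
      have cC := claimC hN hlin hrec h4 d
      have hpS : pS H (2*k+6+d) = pS H (2*k+5+d) + H (2*k+6+d) := by
        have := pS_succ (H := H) (2*k+5+d)
        have e : 2*k+5+d+1 = 2*k+6+d := by omega
        rwa [e] at this
      have e2 : 2*k+5+(d+1)+1 = (2*k+6+d)+1 := by omega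
      have e3 : 2*k+5+(d+1) = 2*k+6+d := by omega
      have e4 : 2*k+5+d+1 = 2*k+6+d := by omega
      rw [e2, e3, r1, hpS]
      rw [e4] at ihd
      omega

include hN hlin hrec h4 in
lemma reach : ∀ n m, m ≤ pS H n → ∃ s : Finset ℕ, s ⊆ Finset.Icc 1 n ∧ ∑ i ∈ s, H i = m := by
  intro n
  induction n with
  | zero =>
    intro m hm
    rw [pS_zero] at hm
    have : m = 0 := by omega
    subst this
    exact ⟨∅, by simp, by simp⟩
  | succ n ih =>
    intro m hm
    by_cases hc : m ≤ pS H n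
    · obtain ⟨s, hs1, hs2⟩ := ih m hc
      exact ⟨s, hs1.trans (Finset.Icc_subset_Icc_right (by omega)), hs2⟩
    · push_neg at hc
      have hB : H (n+1) ≤ 1 + pS H n := Ball hN hlin hrec h4 n
      have hps := pS_succ (H := H) n
      have h1 : H (n+1) ≤ m := by omega
      have h2 : m - H (n+1) ≤ pS H n := by omega
      obtain ⟨s, hs1, hs2⟩ := ih (m - H (n+1)) h2
      have hnot : (n+1) ∉ s := by
        intro hmem
        have := hs1 hmem
        simp only [Finset.mem_Icc] at this
        omega
      refine ⟨insert (n+1) s, ?_, ?_⟩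
      · rw [Finset.insert_subset_iff]
        exact ⟨Finset.mem_Icc.mpr (by omega),
          hs1.trans (Finset.Icc_subset_Icc_right (by omega))⟩
      · rw [Finset.sum_insert hnot, hs2]
        omega

end Main

end OneKZ

open OneKZ in
theorem one_kzeros_N_complete_iff (k N : ℕ) (hN : 1 ≤ N) (H : ℕ → ℕ)
    (h : IsPLRS (k + 2) (fun i => if i = 1 then 1 else if i = k + 2 then N else 0) H) :
    SeqComplete H ↔ N ≤ ((k + 2) * (k + 3) + 3) / 4 := by
  have hlin : ∀ n, 1 ≤ n → n ≤ k + 2 → H n = n := lin_of h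
  have hrec : ∀ n, k + 2 ≤ n → H (n + 1) = H n + N * H (n - (k + 1)) := rec_of h
  constructor
  · intro hc
    by_contra hnot
    push_neg at hnot
    have h4' : (k+2)*(k+3) + 4 ≤ 4*N := by omega
    have hK4 : H (k+4) = (k+2) + 3*N := by
      have := F1 hlin hrec 2 (by omega)
      have e : k+2+2 = k+4 := by omega
      rw [e] at this
      simp only [tri] at this
      omega
    have hpS : pS H (k+3) = tri (k+2) + (k+2) + N := by
      have hh := FS hlin hrec 1 (by omega)
      have e : k+2+1 = k+3 := by omega
      have htt : tet 1 = 1 := rfl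
      rw [e, htt] at hh
      omega
    have hbig : pS H (k+3) + 2 ≤ H (k+4) := by
      have ht := tri_two (k+2)
      rw [hK4, hpS]
      nlinarith
    obtain ⟨s, hs1, hs2⟩ := hc (pS H (k+3) + 1) (by omega)
    by_cases hsub : s ⊆ Finset.Icc 1 (k+3)
    · have := Finset.sum_le_sum_of_subset (f := H) hsub
      rw [hs2] at this
      have : pS H (k+3) + 1 ≤ pS H (k+3) := this
      omega
    · obtain ⟨j, hjs, hjn⟩ := Finset.not_subset.mp hsub
      have hj1 : 1 ≤ j := hs1 j hjs
      have hjk : k + 4 ≤ j := by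
        by_contra hcon
        exact hjn (Finset.mem_Icc.mpr (by omega))
      have hmono := mono_le hlin hrec (k+4) j (by omega) hjk
      have hsum : H j ≤ ∑ i ∈ s, H i :=
        Finset.single_le_sum (f := fun i => H i) (fun i _ => Nat.zero_le _) hjs
      rw [hs2] at hsum
      omega
  · intro hle
    have h4 : 4*N ≤ (k+2)*(k+3)+2 := by
      obtain ⟨t, ht⟩ := Nat.even_mul_succ_self (k+2)
      have he : (k+2)*((k+2)+1) = (k+2)*(k+3) := by ring
      omega
    intro M hM
    have hMle : M ≤ pS H M := by
      have hcard : (Finset.Icc 1 M).card = M := by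
        rw [Nat.card_Icc]; omega
      have := Finset.card_nsmul_le_sum (Finset.Icc 1 M) H 1
        (fun i hi => Hpos hlin hrec i (Finset.mem_Icc.mp hi).1)
      rw [hcard, smul_eq_mul, mul_one] at this
      exact this
    obtain ⟨s, hs1, hs2⟩ := reach hN hlin hrec h4 M M hMle
    exact ⟨s, fun i hi => (Finset.mem_Icc.mp (hs1 hi)).1, hs2⟩
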